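/- If a symmetric configuration of order n ≥ 2 has exactly n^2+n+1 points, then it is a projective plane of order n: any two distinct points lie on exactly one common block and any two distinct blocks meet in exactly one point. -/
import Mathlib


/-- A symmetric configuration of order `n ≥ 2` with exactly `n^2+n+1` points is a
projective plane of order `n`: two distinct points lie on exactly one common block
and two distinct blocks meet in exactly one point. -/
theorem stmt17 {α : Type*} [DecidableEq α] (n : ℕ) (hn : 2 ≤ n)
    (P : Finset α) (B : Finset (Finset α))
    (hPne : P.Nonempty)
    (hsub : ∀ b ∈ B, b ⊆ P)
    (hblk : ∀ b ∈ B, b.card = n + 1)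
    (hpt : ∀ p ∈ P, (B.filter (fun b => p ∈ b)).card = n + 1)
    (hint : ∀ b ∈ B, ∀ b' ∈ B, b ≠ b' → (b ∩ b').card ≤ 1)
    (hcard : P.card = n ^ 2 + n + 1) :
    (∀ p ∈ P, ∀ q ∈ P, p ≠ q → ∃! b, b ∈ B ∧ p ∈ b ∧ q ∈ b) ∧
    (∀ b ∈ B, ∀ b' ∈ B, b ≠ b' → (b ∩ b').card = 1) := by
  classical
  -- uniqueness helper: two distinct blocks can't share two distinct points
  have uniq : ∀ b ∈ B, ∀ b' ∈ B, b ≠ b' → ∀ p q : α, p ≠ q → p ∈ b → q ∈ b →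
      p ∈ b' → q ∈ b' → False := by
    intro b hb b' hb' hne p q hpq hpb hqb hpb' hqb'
    have h1 := hint b hb b' hb' hne
    exact hpq (Finset.card_le_one.1 h1 p (Finset.mem_inter.2 ⟨hpb, hpb'⟩)
      q (Finset.mem_inter.2 ⟨hqb, hqb'⟩))
  -- cover lemma: any two distinct points lie on some common block
  have key : ∀ p ∈ P, ∀ q ∈ P, p ≠ q → ∃ b ∈ B, p ∈ b ∧ q ∈ b := by
    intro p hp q hq hpq
    set Bp := B.filter (fun b => p ∈ b) with hBp
    have hBpcard : Bp.card = n + 1 := hpt p hp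
    have hmemBp : ∀ b ∈ Bp, b ∈ B ∧ p ∈ b := by
      intro b hb
      simpa [hBp, Finset.mem_filter] using hb
    have hdisj : ∀ b ∈ Bp, ∀ b' ∈ Bp, b ≠ b' →
        Disjoint (b.erase p) (b'.erase p) := by
      intro b hb b' hb' hne
      rw [Finset.disjoint_left]
      intro x hx hx'
      have hb1 := hmemBp b hb
      have hb2 := hmemBp b' hb'
      have h1 := hint b hb1.1 b' hb2.1 hne
      have hxm : x ∈ b ∩ b' := Finset.mem_inter.2
        ⟨Finset.mem_of_mem_erase hx, Finset.mem_of_mem_erase hx'⟩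
      have hpm : p ∈ b ∩ b' := Finset.mem_inter.2 ⟨hb1.2, hb2.2⟩
      exact (Finset.ne_of_mem_erase hx) (Finset.card_le_one.1 h1 x hxm p hpm)
    have hcardS : (Bp.biUnion (fun b => b.erase p)).card = (n + 1) * n := by
      rw [Finset.card_biUnion hdisj]
      have : ∀ b ∈ Bp, (b.erase p).card = n := by
        intro b hb
        rw [Finset.card_erase_of_mem (hmemBp b hb).2, hblk b (hmemBp b hb).1]
        omega
      rw [Finset.sum_congr rfl this, Finset.sum_const, hBpcard, smul_eq_mul]
    have hsubS : Bp.biUnion (fun b => b.erase p) ⊆ P.erase p := by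
      intro x hx
      simp only [Finset.mem_biUnion] at hx
      obtain ⟨b, hb, hxb⟩ := hx
      exact Finset.mem_erase.2 ⟨Finset.ne_of_mem_erase hxb,
        hsub b (hmemBp b hb).1 (Finset.mem_of_mem_erase hxb)⟩
    have hcardPe : (P.erase p).card = (n + 1) * n := by
      rw [Finset.card_erase_of_mem hp, hcard, Nat.add_sub_cancel]
      ring
    have heq : Bp.biUnion (fun b => b.erase p) = P.erase p :=
      Finset.eq_of_subset_of_card_le hsubS (by rw [hcardS, hcardPe])
    have hq' : q ∈ Bp.biUnion (fun b => b.erase p) := by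
      rw [heq]
      exact Finset.mem_erase.2 ⟨hpq.symm, hq⟩
    simp only [Finset.mem_biUnion] at hq'
    obtain ⟨b, hb, hqb⟩ := hq'
    exact ⟨b, (hmemBp b hb).1, (hmemBp b hb).2, Finset.mem_of_mem_erase hqb⟩
  have part1 : ∀ p ∈ P, ∀ q ∈ P, p ≠ q → ∃! b, b ∈ B ∧ p ∈ b ∧ q ∈ b := by
    intro p hp q hq hpq
    obtain ⟨b, hb, hpb, hqb⟩ := key p hp q hq hpq
    refine ⟨b, ⟨hb, hpb, hqb⟩, ?_⟩
    rintro b' ⟨hb', hpb', hqb'⟩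
    by_contra hne
    exact uniq b' hb' b hb hne p q hpq hpb' hqb' hpb hqb
  refine ⟨part1, ?_⟩
  intro b hb b' hb' hne
  have h1 := hint b hb b' hb' hne
  have hbn : b.card = n + 1 := hblk b hb
  have hbn' : b'.card = n + 1 := hblk b' hb'
  -- find p ∈ b \ b'
  have hex : (b \ b').Nonempty := by
    have h2 := Finset.card_sdiff_add_card_inter b b'
    rw [← Finset.card_pos]
    omega
  obtain ⟨p, hpd⟩ := hex
  have hpb : p ∈ b := (Finset.mem_sdiff.1 hpd).1
  have hpnb' : p ∉ b' := (Finset.mem_sdiff.1 hpd).2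
  have hp : p ∈ P := hsub b hb hpb
  by_contra hne1
  have hzero : b ∩ b' = ∅ := Finset.card_eq_zero.1 (by omega)
  -- for each q ∈ b', pick the block through p and q
  have hqprop : ∀ q ∈ b', ∃ L ∈ B, p ∈ L ∧ q ∈ L := by
    intro q hq
    have hqP : q ∈ P := hsub b' hb' hq
    have hpq : p ≠ q := fun h => hpnb' (h ▸ hq)
    exact key p hp q hqP hpq
  choose! f hfB hfp hfq using hqprop
  have hmap : ∀ q ∈ b', f q ∈ (B.filter (fun L => p ∈ L)).erase b := by
    intro q hq
    refine Finset.mem_erase.2 ⟨?_, Finset.mem_filter.2 ⟨hfB q hq, hfp q hq⟩⟩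
    intro hfqb
    have : q ∈ b ∩ b' := Finset.mem_inter.2 ⟨hfqb ▸ hfq q hq, hq⟩
    rw [hzero] at this
    exact absurd this (Finset.notMem_empty q)
  have hinj : Set.InjOn f b' := by
    intro q1 hq1 q2 hq2 hfeq
    by_contra hq12
    have hLB : f q1 ∈ B := hfB q1 hq1
    have hLneb' : f q1 ≠ b' := fun h => hpnb' (h ▸ hfp q1 hq1)
    exact uniq (f q1) hLB b' hb' hLneb' q1 q2 hq12 (hfq q1 hq1)
      (hfeq ▸ hfq q2 hq2) hq1 hq2
  have hle := Finset.card_le_card_of_injOn f hmap hinj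
  have hcardE : ((B.filter (fun L => p ∈ L)).erase b).card = n := by
    rw [Finset.card_erase_of_mem (Finset.mem_filter.2 ⟨hb, hpb⟩), hpt p hp]
    omega
  omega
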